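/- Let M ≥ n + d, C ∈ ℝ^{M×n}, D ∈ ℝ^{M×d}, and let [C, D] = UΣVᵀ be a singular value decomposition with singular values σ₁ ≥ … ≥ σ_{n+d} > 0 satisfying σ_n > σ_{n+1}, partition V = [[V₁₁, V₁₂], [V₂₁, V₂₂]] with V₁₁ ∈ ℝ^{n×n}, V₂₂ ∈ ℝ^{d×d} invertible, let U₁ be the first n columns of U and Σ₁ = diag(σ₁, …, σ_n). Define the corrected matrices C̃ = U₁Σ₁V₁₁ᵀ and D̃ = U₁Σ₁V₂₁ᵀ. Then the corrected system is compatible with the TLS solution: C̃ X = D̃ for X = −V₁₂V₂₂⁻¹, and the perturbation satisfies ‖[C̃ − C, D̃ − D]‖_F = (σ_{n+1}² + … + σ_{n+d}²)^{1/2}. -/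

import Mathlib

open Matrix

/-- The Frobenius norm of a real matrix. -/
noncomputable def frob {α β : Type*} [Fintype α] [Fintype β] (M : Matrix α β ℝ) : ℝ :=
  Real.sqrt (∑ i, ∑ j, M i j ^ 2)

/-- `X` is a real TLS solution for data `C, D`: there exist perturbations `Ẽ, G̃` with
`(C + Ẽ) X = D + G̃` attaining the minimum of `‖[Ẽ, G̃]‖_F` among all feasible triples
`(X', Ẽ', G̃')`. -/
def IsTLSSol {M n d : ℕ}
    (C : Matrix (Fin M) (Fin n) ℝ) (D : Matrix (Fin M) (Fin d) ℝ)
    (X : Matrix (Fin n) (Fin d) ℝ) : Prop :=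
  ∃ (E : Matrix (Fin M) (Fin n) ℝ) (G : Matrix (Fin M) (Fin d) ℝ),
    (C + E) * X = D + G ∧
    ∀ (E' : Matrix (Fin M) (Fin n) ℝ) (G' : Matrix (Fin M) (Fin d) ℝ)
      (X' : Matrix (Fin n) (Fin d) ℝ),
      (C + E') * X' = D + G' → frob (fromCols E G) ≤ frob (fromCols E' G')

lemma sumSq_eq_trace {α β : Type*} [Fintype α] [Fintype β] (A : Matrix α β ℝ) :
    ∑ i, ∑ j, A i j ^ 2 = (Aᵀ * A).trace := by
  rw [Finset.sum_comm]
  simp [Matrix.trace, Matrix.mul_apply, Matrix.diag, sq]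

lemma sumSq_conj {m q : Type*} [Fintype m] [Fintype q] [DecidableEq m] [DecidableEq q]
    (U : Matrix m m ℝ) (hU : Uᵀ * U = 1) (V : Matrix q q ℝ) (hV : Vᵀ * V = 1)
    (B : Matrix m q ℝ) :
    ∑ i, ∑ j, (U * B * Vᵀ) i j ^ 2 = ∑ i, ∑ j, B i j ^ 2 := by
  rw [sumSq_eq_trace, sumSq_eq_trace]
  have e1 : (U * B * Vᵀ)ᵀ * (U * B * Vᵀ) = V * (Bᵀ * (Uᵀ * U) * B) * Vᵀ := by
    simp only [Matrix.transpose_mul, Matrix.transpose_transpose, Matrix.mul_assoc]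
  rw [e1, hU, Matrix.mul_one, Matrix.trace_mul_comm, ← Matrix.mul_assoc, ← Matrix.mul_assoc,
    Matrix.trace_mul_comm, ← Matrix.mul_assoc, hV, Matrix.mul_one, Matrix.trace_mul_comm]

/-- under the hypotheses of the TLS theorem, with `U₁` the first `n`
columns of `U` and `S₁ = diag(σ₁, …, σ_n)`, the corrected matrices `C̃ = U₁S₁V₁₁ᵀ` and
`D̃ = U₁S₁V₂₁ᵀ` satisfy `C̃ X = D̃` for the TLS solution `X = −V₁₂V₂₂⁻¹`, and the
perturbation satisfies `‖[C̃ − C, D̃ − D]‖_F = (σ_{n+1}² + … + σ_{n+d}²)^{1/2}`. -/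
theorem tls_corrected_system {M n d : ℕ} (hn : 0 < n) (hd : 0 < d) (hM : n + d ≤ M)
    (C : Matrix (Fin M) (Fin n) ℝ) (D : Matrix (Fin M) (Fin d) ℝ)
    (U : Matrix (Fin M) (Fin M) ℝ) (hU : Uᵀ * U = 1)
    (V₁₁ : Matrix (Fin n) (Fin n) ℝ) (V₁₂ : Matrix (Fin n) (Fin d) ℝ)
    (V₂₁ : Matrix (Fin d) (Fin n) ℝ) (V₂₂ : Matrix (Fin d) (Fin d) ℝ)
    (hV : (fromBlocks V₁₁ V₁₂ V₂₁ V₂₂)ᵀ * fromBlocks V₁₁ V₁₂ V₂₁ V₂₂ = 1)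
    (σ : Fin (n + d) → ℝ) (hσpos : ∀ i, 0 < σ i) (hσdec : Antitone σ)
    (hSVD : fromCols C D =
      U * (Matrix.of fun (i : Fin M) (j : Fin n ⊕ Fin d) =>
            if (i : ℕ) = ((finSumFinEquiv j : Fin (n + d)) : ℕ)
            then σ (finSumFinEquiv j) else 0) *
        (fromBlocks V₁₁ V₁₂ V₂₁ V₂₂)ᵀ)
    (hgap : σ ⟨n, by omega⟩ < σ ⟨n - 1, by omega⟩)
    (hV₂₂ : IsUnit V₂₂.det) :
    let U₁ : Matrix (Fin M) (Fin n) ℝ :=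
      Matrix.of fun i (j : Fin n) => U i ⟨(j : ℕ), by omega⟩
    let S₁ : Matrix (Fin n) (Fin n) ℝ :=
      Matrix.diagonal fun j : Fin n => σ ⟨(j : ℕ), by omega⟩
    let Ct : Matrix (Fin M) (Fin n) ℝ := U₁ * S₁ * V₁₁ᵀ
    let Dt : Matrix (Fin M) (Fin d) ℝ := U₁ * S₁ * V₂₁ᵀ
    Ct * (-(V₁₂ * V₂₂⁻¹)) = Dt ∧
    frob (fromCols (Ct - C) (Dt - D)) =
      Real.sqrt (∑ i ∈ Finset.univ.filter (fun i : Fin (n + d) => n ≤ (i : ℕ)),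
        σ i ^ 2) := by
  intro U₁ S₁ Ct Dt
  simp only [Ct, Dt]
  -- abbreviations
  have h12 : V₁₁ᵀ * V₁₂ + V₂₁ᵀ * V₂₂ = 0 := by
    have h := congrArg Matrix.toBlocks₁₂ hV
    have h1 : Matrix.toBlocks₁₂ (1 : Matrix (Fin n ⊕ Fin d) (Fin n ⊕ Fin d) ℝ) = 0 := by
      ext i j
      simp [Matrix.toBlocks₁₂, Matrix.one_apply]
    simpa [fromBlocks_transpose, fromBlocks_multiply, toBlocks_fromBlocks₁₂, h1] using h
  constructor
  · -- compatibility
    have hinv : V₂₂ * V₂₂⁻¹ = 1 := mul_nonsing_inv V₂₂ hV₂₂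
    have key1 : V₁₁ᵀ * (V₁₂ * V₂₂⁻¹) = -V₂₁ᵀ := by
      have h' : V₁₁ᵀ * V₁₂ = -(V₂₁ᵀ * V₂₂) := eq_neg_of_add_eq_zero_left h12
      rw [← Matrix.mul_assoc, h', Matrix.neg_mul, Matrix.mul_assoc, hinv, Matrix.mul_one]
    rw [Matrix.mul_neg, Matrix.mul_assoc (U₁ * S₁), key1, Matrix.mul_neg, neg_neg]
  · -- Frobenius norm
    have hUS : U * (Matrix.of fun (i : Fin M) (j : Fin n ⊕ Fin d) =>
        if (i : ℕ) = ((finSumFinEquiv j : Fin (n + d)) : ℕ) ∧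
            ((finSumFinEquiv j : Fin (n + d)) : ℕ) < n
        then σ (finSumFinEquiv j) else 0) = fromCols (U₁ * S₁) 0 := by
      ext i j
      rcases j with k | k
      · have hkM : (k : ℕ) < M := by omega
        simp only [Matrix.mul_apply, Matrix.of_apply, finSumFinEquiv_apply_left,
          Fin.coe_castAdd, fromCols, Sum.elim_inl, k.isLt, and_true]
        have hcond : ∀ m : Fin M, ((m : ℕ) = (k : ℕ)) = (m = ⟨(k : ℕ), hkM⟩) := by
          intro m; rw [Fin.ext_iff]
        simp only [hcond, mul_ite, mul_zero, Finset.sum_ite_eq', Finset.mem_univ, if_true]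
        simp only [S₁, Matrix.diagonal_apply, mul_ite, mul_zero, Finset.sum_ite_eq',
          Finset.mem_univ, if_true, U₁, Matrix.of_apply]
        rfl
      · have hfalse : ¬ (n + (k : ℕ) < n) := by omega
        simp [Matrix.mul_apply, fromCols, hfalse]
    have hCtDt : fromCols (U₁ * S₁ * V₁₁ᵀ) (U₁ * S₁ * V₂₁ᵀ) =
        U * (Matrix.of fun (i : Fin M) (j : Fin n ⊕ Fin d) =>
          if (i : ℕ) = ((finSumFinEquiv j : Fin (n + d)) : ℕ) ∧
              ((finSumFinEquiv j : Fin (n + d)) : ℕ) < n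
          then σ (finSumFinEquiv j) else 0) * (fromBlocks V₁₁ V₁₂ V₂₁ V₂₂)ᵀ := by
      rw [hUS, fromBlocks_transpose, fromCols_mul_fromBlocks]
      simp
    have hsub : fromCols (U₁ * S₁ * V₁₁ᵀ - C) (U₁ * S₁ * V₂₁ᵀ - D) =
        fromCols (U₁ * S₁ * V₁₁ᵀ) (U₁ * S₁ * V₂₁ᵀ) - fromCols C D := by
      ext i j
      rcases j with k | k <;> simp [fromCols]
    have hdiff : fromCols (U₁ * S₁ * V₁₁ᵀ - C) (U₁ * S₁ * V₂₁ᵀ - D) =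
        U * ((Matrix.of fun (i : Fin M) (j : Fin n ⊕ Fin d) =>
            if (i : ℕ) = ((finSumFinEquiv j : Fin (n + d)) : ℕ) ∧
                ((finSumFinEquiv j : Fin (n + d)) : ℕ) < n
            then σ (finSumFinEquiv j) else 0) -
          (Matrix.of fun (i : Fin M) (j : Fin n ⊕ Fin d) =>
            if (i : ℕ) = ((finSumFinEquiv j : Fin (n + d)) : ℕ)
            then σ (finSumFinEquiv j) else 0)) * (fromBlocks V₁₁ V₁₂ V₂₁ V₂₂)ᵀ := by
      rw [hsub, hCtDt, hSVD, ← Matrix.sub_mul, ← Matrix.mul_sub]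
    rw [frob, hdiff, sumSq_conj U hU _ hV]
    congr 1
    rw [Finset.sum_comm, Finset.sum_filter, ← Equiv.sum_comp finSumFinEquiv
      (fun i : Fin (n + d) => if n ≤ (i : ℕ) then σ i ^ 2 else 0)]
    refine Finset.sum_congr rfl fun j _ => ?_
    have hlt : ((finSumFinEquiv j : Fin (n + d)) : ℕ) < M :=
      lt_of_lt_of_le (finSumFinEquiv j).isLt hM
    have hterm : ∀ i : Fin M,
        ((if (i : ℕ) = ((finSumFinEquiv j : Fin (n + d)) : ℕ) ∧
              ((finSumFinEquiv j : Fin (n + d)) : ℕ) < n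
          then σ (finSumFinEquiv j) else 0) -
         (if (i : ℕ) = ((finSumFinEquiv j : Fin (n + d)) : ℕ)
          then σ (finSumFinEquiv j) else 0)) ^ 2 =
        if i = ⟨((finSumFinEquiv j : Fin (n + d)) : ℕ), hlt⟩ then
          (if n ≤ ((finSumFinEquiv j : Fin (n + d)) : ℕ) then σ (finSumFinEquiv j) ^ 2 else 0)
        else 0 := by
      intro i
      by_cases hc : (i : ℕ) = ((finSumFinEquiv j : Fin (n + d)) : ℕ)
      · have hi : i = ⟨((finSumFinEquiv j : Fin (n + d)) : ℕ), hlt⟩ := by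
          rw [Fin.ext_iff]; exact hc
        by_cases h2 : n ≤ ((finSumFinEquiv j : Fin (n + d)) : ℕ)
        · have h3 : ¬ ((finSumFinEquiv j : Fin (n + d)) : ℕ) < n := by omega
          simp [hc, hi, h2, h3]
        · have h3 : ((finSumFinEquiv j : Fin (n + d)) : ℕ) < n := by omega
          simp [hc, hi, h2, h3]
      · have hi : ¬ i = ⟨((finSumFinEquiv j : Fin (n + d)) : ℕ), hlt⟩ := by
          rw [Fin.ext_iff]; exact hc
        simp [hc, hi]
    simp only [Matrix.sub_apply, Matrix.of_apply, hterm, Finset.sum_ite_eq',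
      Finset.mem_univ, if_true]
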